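/- Let c>0, m≥1, k ∈ {1,…,m}, and let y=(y_t,y_s) be a point on the forward hyperboloid 𝕃^m_{-c}. Then the infimum, over all points p on 𝕃^m_{-c} whose k-th spatial coordinate is zero, of the geodesic distance (1/√c)·arcosh(−c·⟨y,p⟩_L) equals (1/√c)·arsinh(√c·|y_{s,k}|). -/

import Mathlib

/-- The inverse hyperbolic cosine on `ℝ`: `arcosh x = log (x + √(x² - 1))`. -/
noncomputable def Real.arcosh' (x : ℝ) : ℝ := Real.log (x + Real.sqrt (x ^ 2 - 1))

lemma arcosh_sqrt_one_add_sq (t : ℝ) (ht : 0 ≤ t) :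
    Real.arcosh' (Real.sqrt (1 + t ^ 2)) = Real.arsinh t := by
  rw [Real.arcosh', Real.arsinh]
  have h1 : Real.sqrt (1 + t ^ 2) ^ 2 - 1 = t ^ 2 := by
    rw [Real.sq_sqrt (by positivity)]; ring
  rw [h1, Real.sqrt_sq ht, add_comm]

lemma arcosh_mono' {x y : ℝ} (hx : 1 ≤ x) (hxy : x ≤ y) :
    Real.arcosh' x ≤ Real.arcosh' y := by
  unfold Real.arcosh'
  have h0 : (0:ℝ) < x + Real.sqrt (x ^ 2 - 1) := by
    nlinarith [Real.sqrt_nonneg (x ^ 2 - 1)]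
  exact Real.log_le_log h0 (add_le_add hxy (Real.sqrt_le_sqrt (by nlinarith)))

set_option maxHeartbeats 1600000 in
/-- **Distance to a coordinate hyperplane in the Lorentz model.**
Let `c > 0`, `m ≥ 1`, `k ∈ {1,…,m}` and let `y = (yt, ys)` lie on the forward
hyperboloid `𝕃^m_{-c}`.  Then the infimum, over all points `p = (pt, ps)` of
`𝕃^m_{-c}` with `ps k = 0`, of the geodesic distance
`(1/√c)·arcosh(-c·⟨y,p⟩_L)` equals `(1/√c)·arsinh(√c·|ys k|)`. -/
theorem dist_to_coordinate_hyperplane (c : ℝ) (hc : 0 < c) (m : ℕ) (hm : 1 ≤ m)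
    (k : Fin m) (yt : ℝ) (ys : Fin m → ℝ)
    (hy : -yt ^ 2 + ∑ i, (ys i) ^ 2 = -(1 / c)) (hyt : 0 < yt) :
    sInf {d : ℝ | ∃ pt : ℝ, ∃ ps : Fin m → ℝ,
        (-pt ^ 2 + ∑ i, (ps i) ^ 2 = -(1 / c)) ∧ 0 < pt ∧ ps k = 0 ∧
        d = (1 / Real.sqrt c) *
              Real.arcosh' (-c * (-(yt * pt) + ∑ i, ys i * ps i))}
      = (1 / Real.sqrt c) * Real.arsinh (Real.sqrt c * |ys k|) := by
  have hc' : c ≠ 0 := hc.ne'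
  set a : ℝ := ys k with ha
  set S : ℝ := ∑ i, (ys i) ^ 2 with hS
  have hSa : a ^ 2 ≤ S := by
    rw [hS, ha]
    exact Finset.single_le_sum (f := fun i => (ys i) ^ 2)
      (fun i _ => sq_nonneg _) (Finset.mem_univ k)
  have hu2 : (0:ℝ) < 1 + c * a ^ 2 := by positivity
  set u : ℝ := Real.sqrt (1 + c * a ^ 2) with hu
  have hupos : 0 < u := Real.sqrt_pos.mpr hu2
  have husq : u ^ 2 = 1 + c * a ^ 2 := Real.sq_sqrt hu2.le
  have hu1 : 1 ≤ u := by
    nlinarith [sq_nonneg a]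
  have hsc : 0 < Real.sqrt c := Real.sqrt_pos.mpr hc
  -- the target equals arcosh u (scaled)
  have htarget : Real.arsinh (Real.sqrt c * |a|) = Real.arcosh' u := by
    have h1 : (Real.sqrt c * |a|) ^ 2 = c * a ^ 2 := by
      rw [mul_pow, Real.sq_sqrt hc.le, sq_abs]
    rw [← arcosh_sqrt_one_add_sq (Real.sqrt c * |a|) (by positivity), h1, hu]
  apply IsLeast.csInf_eq
  constructor
  · -- membership: the projection point
    refine ⟨yt / u, Function.update (fun i => ys i / u) k 0, ?_, by positivity,
      Function.update_self k 0 _, ?_⟩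
    · have hsq : ∀ i, (Function.update (fun i => ys i / u) k 0 i) ^ 2
          = Function.update (fun i => (ys i / u) ^ 2) k 0 i := by
        intro i
        by_cases h : i = k
        · subst h; simp
        · simp [Function.update_of_ne h]
      have hsum : ∑ i, (Function.update (fun i => ys i / u) k 0 i) ^ 2
          = S / u ^ 2 - a ^ 2 / u ^ 2 := by
        simp only [hsq]
        rw [Finset.sum_update_of_mem (Finset.mem_univ k), ← Finset.erase_eq,
          Finset.sum_erase_eq_sub (Finset.mem_univ k)]
        simp only [zero_add, div_pow]
        rw [← Finset.sum_div, hS, ha]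
      rw [hsum, div_pow]
      have hy2 : c * yt ^ 2 = 1 + c * S := by
        have h := hy
        field_simp at h
        linarith
      have hune : u ^ 2 ≠ 0 := by positivity
      field_simp
      linear_combination (-1) * hy2 + husq
    · have hsum2 : ∑ i, ys i * Function.update (fun i => ys i / u) k 0 i
          = S / u - a ^ 2 / u := by
        have hsq : ∀ i, ys i * Function.update (fun i => ys i / u) k 0 i
            = Function.update (fun i => ys i * (ys i / u)) k 0 i := by
          intro i
          by_cases h : i = k
          · subst h; simp
          · simp [Function.update_of_ne h]
        simp only [hsq]
        rw [Finset.sum_update_of_mem (Finset.mem_univ k), ← Finset.erase_eq,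
          Finset.sum_erase_eq_sub (Finset.mem_univ k)]
        simp only [zero_add]
        have h2 : ∀ i : Fin m, ys i * (ys i / u) = ys i ^ 2 / u := fun i => by ring
        simp only [h2]
        rw [← Finset.sum_div, hS, ha]
      rw [hsum2, htarget]
      congr 1
      have hy2 : c * yt ^ 2 = 1 + c * S := by
        have h := hy
        field_simp at h
        linarith
      have harg : -c * (-(yt * (yt / u)) + (S / u - a ^ 2 / u)) = u := by
        have hune : u ≠ 0 := hupos.ne'
        field_simp
        linear_combination hy2 - husq
      rw [harg]
  · -- lower bound
    rintro d ⟨pt, ps, hp, hpt, hpk, rfl⟩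
    set P : ℝ := ∑ i, (ps i) ^ 2 with hP
    have hPnn : 0 ≤ P := Finset.sum_nonneg fun i _ => sq_nonneg _
    set Q : ℝ := ∑ i, ys i * ps i with hQ
    -- Cauchy–Schwarz on the coordinates away from k
    have hQe : Q = ∑ i ∈ Finset.univ.erase k, ys i * ps i := by
      rw [hQ, ← Finset.sum_erase_add _ _ (Finset.mem_univ k), hpk]
      simp
    have hPe : ∑ i ∈ Finset.univ.erase k, (ps i) ^ 2 = P := by
      rw [hP, Finset.sum_erase_eq_sub (Finset.mem_univ k), hpk]
      simp
    have hSe : ∑ i ∈ Finset.univ.erase k, (ys i) ^ 2 = S - a ^ 2 := by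
      rw [hS, Finset.sum_erase_eq_sub (Finset.mem_univ k), ha]
    have hCS : Q ^ 2 ≤ (S - a ^ 2) * P := by
      rw [hQe, ← hSe, ← hPe]
      exact Finset.sum_mul_sq_le_sq_mul_sq _ _ _
    set w : ℝ := Real.sqrt ((S - a ^ 2) * P) with hw
    have hwnn : 0 ≤ w := Real.sqrt_nonneg _
    have hwsq : w ^ 2 = (S - a ^ 2) * P :=
      Real.sq_sqrt (mul_nonneg (by linarith) hPnn)
    have hQw : Q ≤ w := by
      have h1 : Q ≤ Real.sqrt (Q ^ 2) := by
        rw [Real.sqrt_sq_eq_abs]; exact le_abs_self Q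
      exact h1.trans (Real.sqrt_le_sqrt hCS)
    have hwu : (w * u) ^ 2 = (S - a ^ 2) * (P * (1 + c * a ^ 2)) := by
      rw [mul_pow, hwsq, husq]; ring
    -- AM–GM step : S - a² + P * (1 + c a²) ≥ 2 w u
    have hX : (0:ℝ) ≤ S - a ^ 2 := by linarith
    have hY : (0:ℝ) ≤ P * (1 + c * a ^ 2) := mul_nonneg hPnn hu2.le
    have hAM : 2 * (w * u) ≤ (S - a ^ 2) + P * (1 + c * a ^ 2) := by
      have e : w * u = Real.sqrt ((S - a ^ 2) * P * (1 + c * a ^ 2)) := by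
        rw [hw, hu, ← Real.sqrt_mul (mul_nonneg hX hPnn)]
      have e' : Real.sqrt (S - a ^ 2) * Real.sqrt (P * (1 + c * a ^ 2))
          = Real.sqrt ((S - a ^ 2) * P * (1 + c * a ^ 2)) := by
        rw [← Real.sqrt_mul hX, mul_assoc]
      calc 2 * (w * u)
          = 2 * (Real.sqrt (S - a ^ 2) * Real.sqrt (P * (1 + c * a ^ 2))) := by
            rw [e, e']
        _ ≤ Real.sqrt (S - a ^ 2) ^ 2 + Real.sqrt (P * (1 + c * a ^ 2)) ^ 2 := by
            linarith [two_mul_le_add_sq (Real.sqrt (S - a ^ 2))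
              (Real.sqrt (P * (1 + c * a ^ 2)))]
        _ = (S - a ^ 2) + P * (1 + c * a ^ 2) := by
            rw [Real.sq_sqrt hX, Real.sq_sqrt hY]
    have hy2 : c * yt ^ 2 = 1 + c * S := by
      have h := hy
      field_simp at h
      linarith
    have hp2 : c * pt ^ 2 = 1 + c * P := by
      have h := hp
      field_simp at h
      linarith
    -- key inequality : c (yt pt - Q) ≥ u
    have hkey : u ≤ c * (yt * pt - Q) := by
      have e1 : (c * (yt * pt)) ^ 2 - (c * w + u) ^ 2
          = c * ((S - a ^ 2) + P * (1 + c * a ^ 2) - 2 * (w * u)) := by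
        linear_combination (c * pt ^ 2) * hy2 + (1 + c * S) * hp2
          + (-(c ^ 2)) * hwsq + (-1) * husq
      have e2 : 0 ≤ (S - a ^ 2) + P * (1 + c * a ^ 2) - 2 * (w * u) := by linarith
      have e3 : 0 ≤ c * ((S - a ^ 2) + P * (1 + c * a ^ 2) - 2 * (w * u)) :=
        mul_nonneg hc.le e2
      have hsq2 : (c * w + u) ^ 2 ≤ (c * (yt * pt)) ^ 2 := by linarith
      have hcy : 0 < c * (yt * pt) := mul_pos hc (mul_pos hyt hpt)
      have hcwu : 0 < c * w + u := by linarith [mul_nonneg hc.le hwnn]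
      have h2 : c * w + u ≤ c * (yt * pt) := by
        have h4 := Real.sqrt_le_sqrt hsq2
        rwa [Real.sqrt_sq hcwu.le, Real.sqrt_sq hcy.le] at h4
      have h3 : c * Q ≤ c * w := mul_le_mul_of_nonneg_left hQw hc.le
      linarith
    have harg : -c * (-(yt * pt) + Q) = c * (yt * pt - Q) := by ring
    rw [harg, htarget]
    have hle := arcosh_mono' hu1 hkey
    have h1c : (0:ℝ) ≤ 1 / Real.sqrt c := by positivity
    exact mul_le_mul_of_nonneg_left hle h1c
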